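/- Reduction via polar duality when a point is uncovered: suppose a finite family H of closed half-planes does not cover the origin. Let P_o be the set of polar duals of the boundary lines of the half-planes (the line ax+by = 1 dualizes to the point (a,b)), and let L_o be the set of segments from the origin o to points of P_o. If the points P_o admit a 2-coloring in which every closed half-plane containing at least three points of P_o contains both colors, then assigning each segment op the color of p gives a 2-coloring of L_o such that every line intersecting at least three segments of L_o intersects segments of both colors. -/
import Mathlib

/-- A closed half-plane in `ℝ²`. -/
def IsHalfPlane (h : Set (ℝ × ℝ)) : Prop :=
  ∃ a b c : ℝ, (a, b) ≠ (0, 0) ∧ h = {p : ℝ × ℝ | a * p.1 + b * p.2 ≤ c}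

/-- A line in `ℝ²`. -/
def IsLine (l : Set (ℝ × ℝ)) : Prop :=
  ∃ a b c : ℝ, (a, b) ≠ (0, 0) ∧ l = {p : ℝ × ℝ | a * p.1 + b * p.2 = c}

private lemma real_eq_of_forall_ge (x y : ℝ)
    (h : ∀ s : ℝ, 0 < s → (s ≤ x ↔ s ≤ y))
    (h' : ∀ s : ℝ, 0 < s → (s ≤ -x ↔ s ≤ -y)) : x = y := by
  rcases lt_trichotomy x 0 with hx | hx | hx
  · have h1 : -x ≤ -y := (h' (-x) (by linarith)).mp le_rfl
    have h2 : -y ≤ -x := (h' (-y) (by linarith)).mpr le_rfl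
    linarith
  · subst hx
    by_contra hne
    rcases lt_trichotomy y 0 with hy | hy | hy
    · have := (h' (-y) (by linarith)).mpr le_rfl
      linarith
    · exact hne hy.symm
    · have := (h y hy).mpr le_rfl
      linarith
  · have h1 : x ≤ y := (h x hx).mp le_rfl
    have h2 : y ≤ x := (h y (by linarith)).mpr le_rfl
    linarith

private lemma dual_inj :
    Function.Injective (fun q : ℝ × ℝ => {p : ℝ × ℝ | 1 ≤ q.1 * p.1 + q.2 * p.2}) := by
  intro q q' hqq
  have hmem : ∀ p : ℝ × ℝ, (1 ≤ q.1 * p.1 + q.2 * p.2) ↔ (1 ≤ q'.1 * p.1 + q'.2 * p.2) := by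
    intro p
    exact Set.ext_iff.mp hqq p
  have hs : ∀ p : ℝ × ℝ, ∀ s : ℝ, 0 < s →
      (s ≤ q.1 * p.1 + q.2 * p.2 ↔ s ≤ q'.1 * p.1 + q'.2 * p.2) := by
    intro p s hs0
    have := hmem (p.1 / s, p.2 / s)
    simp only at this
    have e1 : q.1 * (p.1 / s) + q.2 * (p.2 / s) = (q.1 * p.1 + q.2 * p.2) / s := by
      field_simp
    have e2 : q'.1 * (p.1 / s) + q'.2 * (p.2 / s) = (q'.1 * p.1 + q'.2 * p.2) / s := by
      field_simp
    rw [e1, e2, one_le_div hs0, one_le_div hs0] at this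
    exact this
  have key : ∀ p : ℝ × ℝ, q.1 * p.1 + q.2 * p.2 = q'.1 * p.1 + q'.2 * p.2 := by
    intro p
    apply real_eq_of_forall_ge _ _ (hs p)
    intro s hs0
    have := hs (-p.1, -p.2) s hs0
    simp only at this
    have e1 : q.1 * -p.1 + q.2 * -p.2 = -(q.1 * p.1 + q.2 * p.2) := by ring
    have e2 : q'.1 * -p.1 + q'.2 * -p.2 = -(q'.1 * p.1 + q'.2 * p.2) := by ring
    rw [e1, e2] at this
    exact this
  have k1 := key (1, 0)
  have k2 := key (0, 1)
  simp at k1 k2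
  exact Prod.ext k1 k2

private lemma meets_iff (a b c : ℝ) (q : ℝ × ℝ) :
    ({p : ℝ × ℝ | a * p.1 + b * p.2 = c} ∩ segment ℝ ((0 : ℝ), (0 : ℝ)) q).Nonempty ↔
      ∃ t : ℝ, 0 ≤ t ∧ t ≤ 1 ∧ t * (a * q.1 + b * q.2) = c := by
  constructor
  · rintro ⟨p, hpl, hps⟩
    rw [segment_eq_image] at hps
    obtain ⟨t, ht, hpt⟩ := hps
    refine ⟨t, ht.1, ht.2, ?_⟩
    have h1 : p.1 = t * q.1 := by
      have := congrArg Prod.fst hpt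
      simp [Prod.smul_def] at this
      linarith [this]
    have h2 : p.2 = t * q.2 := by
      have := congrArg Prod.snd hpt
      simp [Prod.smul_def] at this
      linarith [this]
    have : a * p.1 + b * p.2 = c := hpl
    rw [h1, h2] at this
    linarith [this]
  · rintro ⟨t, ht0, ht1, htc⟩
    refine ⟨t • q, ?_, ?_⟩
    · show a * (t • q).1 + b * (t • q).2 = c
      simp only [Prod.smul_fst, Prod.smul_snd, smul_eq_mul]
      nlinarith [htc]
    · rw [segment_eq_image]
      exact ⟨t, ⟨ht0, ht1⟩, by simp⟩

theorem polar_duality_reduction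
    (H : Set (Set (ℝ × ℝ))) (hfin : H.Finite) (hH : ∀ h ∈ H, IsHalfPlane h)
    (ho : ∀ h ∈ H, ((0 : ℝ), (0 : ℝ)) ∉ h)
    (P : Set (ℝ × ℝ))
    (hP : P = {q : ℝ × ℝ | ∃ h ∈ H, h = {p : ℝ × ℝ | 1 ≤ q.1 * p.1 + q.2 * p.2}})
    (χ : ℝ × ℝ → Bool)
    (hχ : ∀ h : Set (ℝ × ℝ), IsHalfPlane h → 3 ≤ (h ∩ P).ncard →
      (∃ q ∈ h ∩ P, χ q = true) ∧ (∃ q ∈ h ∩ P, χ q = false)) :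
    ∀ l : Set (ℝ × ℝ), IsLine l →
      3 ≤ {q ∈ P | (l ∩ segment ℝ ((0 : ℝ), (0 : ℝ)) q).Nonempty}.ncard →
      (∃ q ∈ P, (l ∩ segment ℝ ((0 : ℝ), (0 : ℝ)) q).Nonempty ∧ χ q = true) ∧
      (∃ q ∈ P, (l ∩ segment ℝ ((0 : ℝ), (0 : ℝ)) q).Nonempty ∧ χ q = false) := by
  -- P is finite
  have hPfin : P.Finite := by
    have hPeq : P = (fun q : ℝ × ℝ => {p : ℝ × ℝ | 1 ≤ q.1 * p.1 + q.2 * p.2}) ⁻¹' H := by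
      rw [hP]; ext q; simp [eq_comm]
    rw [hPeq]
    exact Set.Finite.preimage dual_inj.injOn hfin
  intro l hl hcard
  obtain ⟨a, b, c, hab, rfl⟩ := hl
  have hmeet := meets_iff a b c
  rcases lt_trichotomy c 0 with hc | hc | hc
  · -- c < 0
    have hhp : IsHalfPlane {p : ℝ × ℝ | a * p.1 + b * p.2 ≤ c} := ⟨a, b, c, hab, rfl⟩
    have hset : {q ∈ P | ({p : ℝ × ℝ | a * p.1 + b * p.2 = c} ∩
        segment ℝ ((0 : ℝ), (0 : ℝ)) q).Nonempty} =
        {p : ℝ × ℝ | a * p.1 + b * p.2 ≤ c} ∩ P := by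
      ext q
      simp only [Set.mem_setOf_eq, Set.mem_inter_iff, hmeet]
      rw [and_comm]
      apply and_congr_left
      intro _
      constructor
      · rintro ⟨t, ht0, ht1, htc⟩
        by_contra hd
        push_neg at hd
        rcases ht0.lt_or_eq with h0 | h0
        · nlinarith [mul_lt_mul_of_pos_left hd h0,
            mul_nonneg (sub_nonneg.mpr ht1) (neg_nonneg.mpr hc.le)]
        · rw [← h0] at htc; simp at htc; linarith
      · intro hd
        have hdne : a * q.1 + b * q.2 ≠ 0 := by intro h0; rw [h0] at hd; linarith
        refine ⟨c / (a * q.1 + b * q.2), ?_, ?_, div_mul_cancel₀ c hdne⟩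
        · rw [div_nonneg_iff]; right; constructor <;> linarith
        · rw [div_le_one_of_neg] <;> linarith
    rw [hset] at hcard
    obtain ⟨⟨qt, hqt, ht⟩, ⟨qf, hqf, hf⟩⟩ := hχ _ hhp hcard
    rw [← hset] at hqt hqf
    exact ⟨⟨qt, hqt.1, hqt.2, ht⟩, ⟨qf, hqf.1, hqf.2, hf⟩⟩
  · -- c = 0 : line through origin, meets every segment
    subst hc
    obtain ⟨M, hM⟩ := (hPfin.image Prod.fst).bddAbove
    have hhp : IsHalfPlane {p : ℝ × ℝ | 1 * p.1 + 0 * p.2 ≤ M} :=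
      ⟨1, 0, M, by simp, rfl⟩
    have hmeets : ∀ q : ℝ × ℝ, ({p : ℝ × ℝ | a * p.1 + b * p.2 = 0} ∩
        segment ℝ ((0 : ℝ), (0 : ℝ)) q).Nonempty := by
      intro q
      rw [hmeet]
      exact ⟨0, le_rfl, zero_le_one, by ring⟩
    have hset : {q ∈ P | ({p : ℝ × ℝ | a * p.1 + b * p.2 = 0} ∩
        segment ℝ ((0 : ℝ), (0 : ℝ)) q).Nonempty} =
        {p : ℝ × ℝ | 1 * p.1 + 0 * p.2 ≤ M} ∩ P := by
      ext q
      simp only [Set.mem_setOf_eq, Set.mem_inter_iff, one_mul, zero_mul, add_zero]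
      constructor
      · rintro ⟨hq, -⟩
        exact ⟨hM (Set.mem_image_of_mem _ hq), hq⟩
      · rintro ⟨-, hq⟩
        exact ⟨hq, hmeets q⟩
    rw [hset] at hcard
    obtain ⟨⟨qt, hqt, ht⟩, ⟨qf, hqf, hf⟩⟩ := hχ _ hhp hcard
    exact ⟨⟨qt, hqt.2, hmeets qt, ht⟩, ⟨qf, hqf.2, hmeets qf, hf⟩⟩
  · -- c > 0
    have hab' : ((-a : ℝ), (-b : ℝ)) ≠ (0, 0) := by
      intro h
      rw [Prod.mk.injEq] at h
      exact hab (by rw [Prod.mk.injEq]; exact ⟨neg_eq_zero.mp h.1, neg_eq_zero.mp h.2⟩)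
    have hhp : IsHalfPlane {p : ℝ × ℝ | -a * p.1 + -b * p.2 ≤ -c} :=
      ⟨-a, -b, -c, hab', rfl⟩
    have hset : {q ∈ P | ({p : ℝ × ℝ | a * p.1 + b * p.2 = c} ∩
        segment ℝ ((0 : ℝ), (0 : ℝ)) q).Nonempty} =
        {p : ℝ × ℝ | -a * p.1 + -b * p.2 ≤ -c} ∩ P := by
      ext q
      simp only [Set.mem_setOf_eq, Set.mem_inter_iff, hmeet]
      rw [and_comm]
      apply and_congr_left
      intro _
      constructor
      · rintro ⟨t, ht0, ht1, htc⟩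
        by_contra hd
        push_neg at hd
        have hd' : a * q.1 + b * q.2 < c := by linarith
        rcases ht0.lt_or_eq with h0 | h0
        · nlinarith [mul_lt_mul_of_pos_left hd' h0,
            mul_nonneg (sub_nonneg.mpr ht1) hc.le]
        · rw [← h0] at htc; simp at htc; linarith
      · intro hd
        have hd' : c ≤ a * q.1 + b * q.2 := by linarith
        have hdne : a * q.1 + b * q.2 ≠ 0 := by intro h0; rw [h0] at hd'; linarith
        refine ⟨c / (a * q.1 + b * q.2), ?_, ?_, div_mul_cancel₀ c hdne⟩
        · apply div_nonneg <;> linarith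
        · rw [div_le_one] <;> linarith
    rw [hset] at hcard
    obtain ⟨⟨qt, hqt, ht⟩, ⟨qf, hqf, hf⟩⟩ := hχ _ hhp hcard
    rw [← hset] at hqt hqf
    exact ⟨⟨qt, hqt.1, hqt.2, ht⟩, ⟨qf, hqf.1, hqf.2, hf⟩⟩
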